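/- Let φ : F_n → F_{2n} be the homomorphism between free groups sending the i-th generator x_i to the commutator [x_{2i}, x_{2i+1}] (0 ≤ i < n), and let p be a prime. If w ∈ F_n has no p-th root in F_n (there is no y ∈ F_n with y^p = w), then φ(w) has no p-th root in F_{2n}. -/

import Mathlib

open scoped commutatorElement

/-- The homomorphism `F_n → F_{2n}` sending the `i`-th generator `xᵢ` to the
commutator `⁅x_{2i}, x_{2i+1}⁆`. -/
noncomputable def phi (n : ℕ) : FreeGroup (Fin n) →* FreeGroup (Fin (2 * n)) :=
  FreeGroup.lift fun i =>
    ⁅FreeGroup.of (⟨2 * (i : ℕ), by have := i.isLt; omega⟩ : Fin (2 * n)),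
     FreeGroup.of (⟨2 * (i : ℕ) + 1, by have := i.isLt; omega⟩ : Fin (2 * n))⁆

open List

namespace FreeGroupAux

variable {α : Type*} [DecidableEq α]

/-- A word is reduced iff no two adjacent letters cancel. -/
def IsRed (L : List (α × Bool)) : Prop :=
  List.Chain' (fun x y : α × Bool => ¬(x.1 = y.1 ∧ x.2 = !y.2)) L

theorem isRed_reduce_eq_self {L : List (α × Bool)} (h : IsRed L) :
    FreeGroup.reduce L = L := by
  induction L with
  | nil => rfl
  | cons x L ih =>
    have hL : IsRed L := h.tail
    rw [FreeGroup.reduce.cons, ih hL]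
    cases L with
    | nil => rfl
    | cons y t =>
      have hxy : ¬(x.1 = y.1 ∧ x.2 = !y.2) := (List.isChain_cons_cons.1 h).1
      simp [hxy]

theorem reduce_length_le (L : List (α × Bool)) :
    (FreeGroup.reduce L).length ≤ L.length :=
  (FreeGroup.Red.sublist (FreeGroup.reduce.red)).length_le

theorem isRed_of_reduce_eq_self {L : List (α × Bool)} (h : FreeGroup.reduce L = L) :
    IsRed L := by
  induction L with
  | nil => exact List.isChain_nil
  | cons x L ih =>
    rw [FreeGroup.reduce.cons] at h
    rcases hr : FreeGroup.reduce L with _ | ⟨y, t⟩ <;> rw [hr] at h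
    · simp only at h
      have : L = [] := by simpa using congrArg List.length h.symm
      subst this
      exact List.isChain_singleton x
    · by_cases hc : x.1 = y.1 ∧ x.2 = !y.2
      · simp only [hc, if_true] at h
        exfalso
        have h1 : (y :: t).length ≤ L.length := hr ▸ reduce_length_le L
        have : t.length = L.length + 1 := by
          have := congrArg List.length h; simpa using this
        simp at h1; omega
      · simp only [hc, if_false] at h
        have hL : L = y :: t := by
          have := congrArg List.tail h; simpa using this.symm
        have hred : FreeGroup.reduce L = L := by rw [hr, hL]
        subst hL
        exact List.isChain_cons_cons.2 ⟨hc, ih hred⟩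

theorem isRed_toWord (x : FreeGroup α) : IsRed x.toWord :=
  isRed_of_reduce_eq_self (FreeGroup.reduce_toWord x)

theorem toWord_mk_of_isRed {L : List (α × Bool)} (h : IsRed L) :
    (FreeGroup.mk L).toWord = L := by
  rw [FreeGroup.toWord_mk, isRed_reduce_eq_self h]

omit [DecidableEq α] in
theorem isRed_infix {L M : List (α × Bool)} (h : IsRed L) (h' : M <:+: L) : IsRed M :=
  List.IsChain.infix h h'


/-- no cancellation between the last and first letters -/
def NotCyc (R : List (α × Bool)) : Prop :=
  ∀ x ∈ R.getLast?, ∀ y ∈ R.head?, ¬(x.1 = y.1 ∧ x.2 = !y.2)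

omit [DecidableEq α] in
theorem invRev_cons (x : α × Bool) (U : List (α × Bool)) :
    FreeGroup.invRev (x :: U) = FreeGroup.invRev U ++ [(x.1, !x.2)] := by
  simp [FreeGroup.invRev]

omit [DecidableEq α] in
/-- Cyclic decomposition of a reduced word. -/
theorem cyc_decomp (L : List (α × Bool)) (h : IsRed L) (hne : L ≠ []) :
    ∃ U R, L = U ++ R ++ FreeGroup.invRev U ∧ R ≠ [] ∧ NotCyc R := by
  obtain ⟨m, hm⟩ : ∃ m, L.length ≤ m := ⟨L.length, le_refl _⟩
  induction m generalizing L with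
  | zero => exact absurd (List.length_eq_zero_iff.1 (Nat.le_zero.1 hm)) hne
  | succ m ih =>
  match L, hne with
  | [x], _ =>
    refine ⟨[], [x], by simp [FreeGroup.invRev], by simp, ?_⟩
    intro a ha b hb
    simp at ha hb
    subst ha hb
    simp
  | (x :: y :: T), _ =>
    set L := x :: y :: T with hL
    have hT : (y :: T) ≠ [] := by simp
    -- write L = x :: M ++ [z]
    obtain ⟨M, z, hMz⟩ : ∃ M z, (y :: T) = M ++ [z] := ⟨(y :: T).dropLast, (y :: T).getLast hT, by
      simpa using (List.dropLast_append_getLast hT).symm⟩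
    by_cases hz : z = (x.1, !x.2)
    · -- peel
      rcases M with _ | ⟨m₀, M'⟩
      · -- L = [x, x⁻¹], not reduced
        exfalso
        simp only [List.nil_append] at hMz
        have : y = z ∧ T = [] := by
          constructor
          · exact (List.cons.injEq _ _ _ _ ▸ hMz).1 |>.symm ▸ rfl
          · simpa using congrArg List.tail hMz
        obtain ⟨hy, hT0⟩ := this
        rw [hL] at h
        have := (List.isChain_cons_cons.1 h).1
        rw [hy, hz] at this
        simp at this
      · have hM : (m₀ :: M') ≠ [] := by simp
        have hMred : IsRed (m₀ :: M') := by
          apply List.IsChain.infix h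
          exact ⟨[x], [z], by rw [hL, hMz]; simp⟩
        obtain ⟨U, R, hdec, hR, hcyc⟩ := ih _ hMred hM (by
          have : L.length ≤ m + 1 := hm
          rw [hL, hMz] at this; simp at this ⊢; omega)
        refine ⟨x :: U, R, ?_, hR, hcyc⟩
        rw [hL, hMz, hdec, invRev_cons, hz]
        simp
    · -- L itself cyclically reduced
      refine ⟨[], L, by simp [FreeGroup.invRev], by simp [hL], ?_⟩
      intro a ha b hb
      rw [hL, hMz] at ha hb
      simp only [List.head?_cons, Option.mem_def, Option.some.injEq] at hb
      have ha' : a = z := by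
        have : (x :: (M ++ [z])).getLast? = some z := by
          rw [List.getLast?_eq_getLast (by simp)]
          simp [List.getLast_append]
        rw [this] at ha; exact (Option.some_injective _ ha).symm
      subst ha'
      rintro ⟨h1, h2⟩
      apply hz
      have : b = x := hb.symm
      subst this
      ext
      · exact h1
      · simp [h2]

omit [DecidableEq α] in
theorem mk_flatten_replicate (R : List (α × Bool)) (p : ℕ) :
    FreeGroup.mk ((List.replicate p R).flatten) = (FreeGroup.mk R) ^ p := by
  induction p with
  | zero => simp; rfl
  | succ k ihk =>
    rw [List.replicate_succ, List.flatten_cons, ← FreeGroup.mul_mk, ihk, pow_succ']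

omit [DecidableEq α] in
theorem flat_head? (R : List (α × Bool)) (hR : R ≠ []) (p : ℕ) (hp : 1 ≤ p) :
    ((List.replicate p R).flatten).head? = R.head? := by
  obtain ⟨k, rfl⟩ : ∃ k, p = k + 1 := ⟨p - 1, by omega⟩
  rw [List.replicate_succ, List.flatten_cons, List.head?_append_of_ne_nil _ hR]

omit [DecidableEq α] in
theorem flat_getLast? (R : List (α × Bool)) (hR : R ≠ []) (p : ℕ) (hp : 1 ≤ p) :
    ((List.replicate p R).flatten).getLast? = R.getLast? := by
  induction p with
  | zero => omega
  | succ k ihk =>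
    rcases Nat.eq_or_lt_of_le hp with h1 | h1
    · simp [← h1]
    · rw [List.replicate_succ, List.flatten_cons,
        List.getLast?_append_of_ne_nil]
      · exact ihk (by omega)
      · intro hc
        have := congrArg List.length hc
        simp at this
        rcases this with h | h
        · omega
        · exact hR h

omit [DecidableEq α] in
theorem isRed_flat (R : List (α × Bool)) (hR : R ≠ []) (hred : IsRed R) (hcyc : NotCyc R)
    (p : ℕ) : IsRed ((List.replicate p R).flatten) := by
  induction p with
  | zero => exact List.isChain_nil
  | succ k ihk =>
    rw [List.replicate_succ, List.flatten_cons]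
    refine List.IsChain.append hred ihk ?_
    intro x hx y hy
    rcases Nat.eq_zero_or_pos k with rfl | hk
    · simp at hy
    · rw [flat_head? R hR k hk] at hy
      exact hcyc x hx y hy


omit [DecidableEq α] in
theorem flat_ne_nil (R : List (α × Bool)) (hR : R ≠ []) (p : ℕ) (hp : 1 ≤ p) :
    (List.replicate p R).flatten ≠ [] := by
  obtain ⟨k, rfl⟩ : ∃ k, p = k + 1 := ⟨p - 1, by omega⟩
  rw [List.replicate_succ, List.flatten_cons]
  simp [hR]

theorem toWord_conj_pow {U R : List (α × Bool)} (h : IsRed (U ++ R ++ FreeGroup.invRev U))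
    (hR : R ≠ []) (hcyc : NotCyc R) (p : ℕ) (hp : 1 ≤ p) :
    ((FreeGroup.mk (U ++ R ++ FreeGroup.invRev U)) ^ p).toWord
      = U ++ ((List.replicate p R).flatten) ++ FreeGroup.invRev U := by
  have h1 : IsRed (U ++ (R ++ FreeGroup.invRev U)) := by rwa [← List.append_assoc]
  obtain ⟨hU, h2, seamU⟩ := List.isChain_append.1 h1
  obtain ⟨hRred, hIRU, seamR⟩ := List.isChain_append.1 h2
  have hflatne := flat_ne_nil R hR p hp
  have hbig : IsRed (U ++ ((List.replicate p R).flatten ++ FreeGroup.invRev U)) := by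
    refine List.isChain_append.2 ⟨hU, ?_, ?_⟩
    · refine List.isChain_append.2 ⟨isRed_flat R hR hRred hcyc p, hIRU, ?_⟩
      intro x hx y hy
      rw [flat_getLast? R hR p hp] at hx
      exact seamR x hx y hy
    · intro x hx y hy
      rw [List.head?_append_of_ne_nil _ hflatne, flat_head? R hR p hp] at hy
      apply seamU x hx y
      rwa [List.head?_append_of_ne_nil _ hR]
  have hmk : FreeGroup.mk (U ++ ((List.replicate p R).flatten ++ FreeGroup.invRev U))
      = (FreeGroup.mk (U ++ R ++ FreeGroup.invRev U)) ^ p := by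
    rw [← FreeGroup.mul_mk, ← FreeGroup.mul_mk, mk_flatten_replicate,
      ← FreeGroup.mul_mk, ← FreeGroup.mul_mk, ← FreeGroup.inv_mk]
    rw [← mul_assoc]
    exact (conj_pow (a := FreeGroup.mk U) (b := FreeGroup.mk R)).symm
  rw [← List.append_assoc] at hmk hbig
  rw [← hmk, toWord_mk_of_isRed hbig]

/-- Summary: word structure of a power of a nontrivial element. -/
theorem pow_toWord_structure (y : FreeGroup α) (hy : y ≠ 1) (p : ℕ) (hp : 1 ≤ p) :
    ∃ U R, y.toWord = U ++ R ++ FreeGroup.invRev U ∧ R ≠ [] ∧ NotCyc R ∧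
      (y ^ p).toWord = U ++ ((List.replicate p R).flatten) ++ FreeGroup.invRev U := by
  obtain ⟨U, R, hdec, hR, hcyc⟩ := cyc_decomp y.toWord (isRed_toWord y)
    (by rwa [Ne, FreeGroup.toWord_eq_nil_iff])
  have hred : IsRed (U ++ R ++ FreeGroup.invRev U) := hdec ▸ isRed_toWord y
  refine ⟨U, R, hdec, hR, hcyc, ?_⟩
  have : y = FreeGroup.mk (U ++ R ++ FreeGroup.invRev U) := by
    rw [← hdec, FreeGroup.mk_toWord]
  rw [this]
  exact toWord_conj_pow hred hR hcyc p hp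
end FreeGroupAux
namespace FreeGroupAux

variable {n : ℕ}

def ga (i : Fin n) : Fin (2 * n) := ⟨2 * (i : ℕ), by have := i.isLt; omega⟩
def gb (i : Fin n) : Fin (2 * n) := ⟨2 * (i : ℕ) + 1, by have := i.isLt; omega⟩

def gg (i : Fin n) (e : Bool) : Fin (2 * n) := if e then ga i else gb i

def blockWord (i : Fin n) (e : Bool) : List (Fin (2 * n) × Bool) :=
  if e then [(ga i, true), (gb i, true), (ga i, false), (gb i, false)]
  else [(gb i, true), (ga i, true), (gb i, false), (ga i, false)]

def blocks (S : List (Fin n × Bool)) : List (Fin (2 * n) × Bool) :=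
  (S.map fun se => blockWord se.1 se.2).flatten

@[simp] theorem blockWord_length (i : Fin n) (e : Bool) : (blockWord i e).length = 4 := by
  cases e <;> rfl

@[simp] theorem blocks_nil : blocks ([] : List (Fin n × Bool)) = [] := rfl

theorem blocks_cons (i : Fin n) (e : Bool) (S : List (Fin n × Bool)) :
    blocks ((i, e) :: S) = blockWord i e ++ blocks S := by
  simp [blocks]

@[simp] theorem blocks_length (S : List (Fin n × Bool)) :
    (blocks S).length = 4 * S.length := by
  induction S with
  | nil => rfl
  | cons x S ih =>
    obtain ⟨i, e⟩ := x
    rw [blocks_cons, List.length_append, ih, blockWord_length]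
    simp; ring

theorem blockWord_ne_nil (i : Fin n) (e : Bool) : blockWord i e ≠ [] := by
  cases e <;> simp [blockWord]

theorem blockWord_head? (i : Fin n) (e : Bool) :
    (blockWord i e).head? = some (gg i e, true) := by
  cases e <;> rfl

theorem blockWord_getLast? (i : Fin n) (e : Bool) :
    (blockWord i e).getLast? = some (gg i (!e), false) := by
  cases e <;> rfl

theorem gg_injective : ∀ (i j : Fin n) (e f : Bool), gg i e = gg j f → i = j ∧ e = f := by
  intro i j e f h
  have hv := congrArg Fin.val h
  cases e <;> cases f <;> simp [gg, ga, gb] at hv ⊢ <;> omega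

theorem mk_blocks (S : List (Fin n × Bool)) :
    FreeGroup.mk (blocks S) = phi n (FreeGroup.mk S) := by
  induction S with
  | nil => rfl
  | cons x S ih =>
    obtain ⟨i, e⟩ := x
    have hsplit : FreeGroup.mk ((i, e) :: S) = FreeGroup.mk [(i, e)] * FreeGroup.mk S := by
      rw [FreeGroup.mul_mk]; rfl
    rw [blocks_cons, ← FreeGroup.mul_mk, ih, hsplit, map_mul]
    congr 1
    have hof : FreeGroup.mk [(i, true)] = FreeGroup.of i := rfl
    have hphiof : phi n (FreeGroup.of i) = ⁅FreeGroup.of (ga i), FreeGroup.of (gb i)⁆ := by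
      simp [phi, ga, gb]
    cases e
    · have : FreeGroup.mk [(i, false)] = (FreeGroup.of i)⁻¹ := by
        rw [← hof, FreeGroup.inv_mk]; rfl
      rw [this, map_inv, hphiof]
      show FreeGroup.mk (blockWord i false) = _
      rw [commutatorElement_def]
      have hbw : blockWord i false
          = [(gb i, true)] ++ [(ga i, true)] ++ [(gb i, false)] ++ [(ga i, false)] := rfl
      rw [hbw, ← FreeGroup.mul_mk, ← FreeGroup.mul_mk, ← FreeGroup.mul_mk]
      have h1 : FreeGroup.mk [(ga i, false)] = (FreeGroup.of (ga i))⁻¹ := by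
        rw [show FreeGroup.of (ga i) = FreeGroup.mk [(ga i, true)] from rfl,
          FreeGroup.inv_mk]; rfl
      have h2 : FreeGroup.mk [(gb i, false)] = (FreeGroup.of (gb i))⁻¹ := by
        rw [show FreeGroup.of (gb i) = FreeGroup.mk [(gb i, true)] from rfl,
          FreeGroup.inv_mk]; rfl
      rw [h1, h2]
      show FreeGroup.of (gb i) * FreeGroup.of (ga i) * (FreeGroup.of (gb i))⁻¹
          * (FreeGroup.of (ga i))⁻¹ = _
      group
    · rw [hof, hphiof]
      show FreeGroup.mk (blockWord i true) = _
      rw [commutatorElement_def]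
      have hbw : blockWord i true
          = [(ga i, true)] ++ [(gb i, true)] ++ [(ga i, false)] ++ [(gb i, false)] := rfl
      rw [hbw, ← FreeGroup.mul_mk, ← FreeGroup.mul_mk, ← FreeGroup.mul_mk]
      have h1 : FreeGroup.mk [(ga i, false)] = (FreeGroup.of (ga i))⁻¹ := by
        rw [show FreeGroup.of (ga i) = FreeGroup.mk [(ga i, true)] from rfl,
          FreeGroup.inv_mk]; rfl
      have h2 : FreeGroup.mk [(gb i, false)] = (FreeGroup.of (gb i))⁻¹ := by
        rw [show FreeGroup.of (gb i) = FreeGroup.mk [(gb i, true)] from rfl,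
          FreeGroup.inv_mk]; rfl
      rw [h1, h2]
      rfl


theorem ga_ne_gb (i : Fin n) : ga i ≠ gb i := by
  simp [ga, gb, Fin.ext_iff]

theorem isRed_blockWord (i : Fin n) (e : Bool) : IsRed (blockWord i e) := by
  have h := ga_ne_gb i
  cases e <;>
    simp [blockWord, IsRed, List.Chain', List.isChain_cons_cons, h, h.symm]

theorem blocks_head? (i : Fin n) (e : Bool) (S : List (Fin n × Bool)) :
    (blocks ((i, e) :: S)).head? = some (gg i e, true) := by
  rw [blocks_cons, List.head?_append_of_ne_nil _ (blockWord_ne_nil i e), blockWord_head?]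

theorem blocks_getLast? (S : List (Fin n × Bool)) (hS : S ≠ []) :
    (blocks S).getLast? = some (gg (S.getLast hS).1 (!(S.getLast hS).2), false) := by
  induction S with
  | nil => exact absurd rfl hS
  | cons x S ih =>
    obtain ⟨i, e⟩ := x
    rcases eq_or_ne S [] with rfl | hS'
    · rw [blocks_cons]
      simp only [blocks_nil, List.append_nil, List.getLast_singleton]
      exact blockWord_getLast? i e
    · rw [blocks_cons, List.getLast?_append_of_ne_nil]
      · rw [ih hS']
        congr 2 <;> rw [List.getLast_cons hS']
      · intro hc
        have := congrArg List.length hc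
        simp at this
        exact hS' this
  
theorem isRed_blocks {S : List (Fin n × Bool)} (h : IsRed S) : IsRed (blocks S) := by
  induction S with
  | nil => exact List.isChain_nil
  | cons x S ih =>
    obtain ⟨i, e⟩ := x
    rw [blocks_cons]
    refine List.IsChain.append (isRed_blockWord i e) (ih h.tail) ?_
    intro a ha b hb
    rw [blockWord_getLast?] at ha
    simp only [Option.mem_def, Option.some.injEq] at ha
    subst ha
    cases S with
    | nil => simp at hb
    | cons x' S' =>
      obtain ⟨j, f⟩ := x'
      rw [blocks_head? j f S'] at hb
      simp only [Option.mem_def, Option.some.injEq] at hb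
      subst hb
      rintro ⟨h1, -⟩
      obtain ⟨rfl, hef⟩ := gg_injective _ _ _ _ h1
      have hch := (List.isChain_cons_cons.1 h).1
      apply hch
      refine ⟨rfl, ?_⟩
      show e = !f
      rw [← hef]
      simp

theorem toWord_phi (w : FreeGroup (Fin n)) : (phi n w).toWord = blocks w.toWord := by
  conv_lhs => rw [← FreeGroup.mk_toWord (x := w)]
  rw [← mk_blocks, toWord_mk_of_isRed (isRed_blocks (isRed_toWord w))]

theorem blocks_injective {S₁ S₂ : List (Fin n × Bool)} (h : blocks S₁ = blocks S₂) :
    S₁ = S₂ := by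
  induction S₁ generalizing S₂ with
  | nil =>
    cases S₂ with
    | nil => rfl
    | cons x S => 
      exfalso
      have := congrArg List.length h
      obtain ⟨i, e⟩ := x
      rw [blocks_length, blocks_length] at this
      simp at this
  | cons x S₁ ih =>
    obtain ⟨i, e⟩ := x
    cases S₂ with
    | nil =>
      exfalso
      have := congrArg List.length h
      rw [blocks_length, blocks_length] at this
      simp at this
    | cons x' S₂ =>
      obtain ⟨j, f⟩ := x'
      have hhead := congrArg List.head? h
      rw [blocks_head?, blocks_head?] at hhead
      simp only [Option.some.injEq, Prod.mk.injEq] at hhead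
      obtain ⟨rfl, rfl⟩ := gg_injective _ _ _ _ hhead.1
      rw [blocks_cons, blocks_cons] at h
      have := List.append_cancel_left h
      rw [ih this]

theorem phi_injective : Function.Injective (phi n) := by
  intro a b h
  have := congrArg FreeGroup.toWord h
  rw [toWord_phi, toWord_phi] at this
  exact FreeGroup.toWord_injective (blocks_injective this)

theorem blockWord_getElem_snd (i : Fin n) (e : Bool) (m : ℕ) (h : m < 4) :
    ((blockWord i e)[m]'(by rw [blockWord_length]; exact h)).2 = decide (m % 4 < 2) := by
  interval_cases m <;> cases e <;> rfl

theorem blocks_getElem_snd (S : List (Fin n × Bool)) (m : ℕ) (h : m < (blocks S).length) :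
    ((blocks S)[m]).2 = decide (m % 4 < 2) := by
  induction S generalizing m with
  | nil => simp at h
  | cons x S ih =>
    obtain ⟨i, e⟩ := x
    rw [blocks_cons] at h
    rw [List.getElem_of_eq (blocks_cons i e S) (by rw [blocks_cons]; exact h)]
    rcases lt_or_ge m 4 with hm | hm
    · rw [List.getElem_append_left (by rw [blockWord_length]; exact hm)]
      exact blockWord_getElem_snd i e m hm
    · rw [List.getElem_append_right (by rw [blockWord_length]; exact hm)]
      have h' : m - (blockWord i e).length < (blocks S).length := by
        rw [blockWord_length]
        rw [List.length_append, blockWord_length] at h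
        omega
      rw [ih _ h']
      congr 1
      rw [blockWord_length]
      conv_lhs => rw [show m - 4 = m - 4 from rfl]
      rw [show m % 4 = (m - 4) % 4 from by omega]

@[simp] theorem flatten_replicate_length {α : Type*} (R : List α) (p : ℕ) :
    ((List.replicate p R).flatten).length = p * R.length := by
  induction p with
  | zero => simp
  | succ k ih => rw [List.replicate_succ, List.flatten_cons, List.length_append, ih]; ring

theorem flatten_replicate_getElem {α : Type*} (R : List α) (hR : R.length ≠ 0) (p m : ℕ)
    (h : m < p * R.length) :
    ((List.replicate p R).flatten)[m]'(by rw [flatten_replicate_length]; exact h)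
      = R[m % R.length]'(Nat.mod_lt _ (by omega)) := by
  induction p generalizing m with
  | zero => omega
  | succ k ih =>
    have he : (List.replicate (k + 1) R).flatten = R ++ (List.replicate k R).flatten := by
      rw [List.replicate_succ, List.flatten_cons]
    rw [List.getElem_of_eq he]
    rcases lt_or_ge m R.length with hm | hm
    · rw [List.getElem_append_left hm]
      congr 1
      exact (Nat.mod_eq_of_lt hm).symm
    · rw [List.getElem_append_right hm]
      have h' : m - R.length < k * R.length := by
        rw [Nat.succ_mul] at h; omega
      rw [ih _ h']
      congr 1
      rw [show m % R.length = (m - R.length) % R.length from by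
        rw [Nat.mod_eq_sub_mod hm]]

theorem blocks_take (S : List (Fin n × Bool)) (q : ℕ) :
    (blocks S).take (4 * q) = blocks (S.take q) := by
  induction S generalizing q with
  | nil => simp
  | cons x S ih =>
    obtain ⟨i, e⟩ := x
    cases q with
    | zero => simp
    | succ q' =>
      rw [blocks_cons, List.take_append]
      rw [List.take_of_length_le (by rw [blockWord_length]; omega)]
      rw [blockWord_length, show 4 * (q' + 1) - 4 = 4 * q' from by ring_nf; omega, ih,
        List.take_succ_cons, blocks_cons]

theorem invRev_getLast? (U : List ((Fin (2 * n)) × Bool)) :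
    (FreeGroup.invRev U).getLast? = U.head?.map (fun x => (x.1, !x.2)) := by
  cases U with
  | nil => rfl
  | cons x U => rw [invRev_cons, List.getLast?_concat]; rfl

theorem key (p : ℕ) (hp : p.Prime) :
    ∀ (w : FreeGroup (Fin n)) (y : FreeGroup (Fin (2 * n))), w ≠ 1 → y ^ p = phi n w →
      ∃ z, y = phi n z := by
  have hp2 := hp.two_le
  intro w y
  obtain ⟨m, hm⟩ : ∃ m, w.toWord.length ≤ m := ⟨_, le_refl _⟩
  induction m generalizing w y with
  | zero =>
    intro hw1 _
    exact absurd (FreeGroup.toWord_eq_nil_iff.1 (List.length_eq_zero_iff.1 (Nat.le_zero.1 hm))) hw1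
  | succ m ih =>
  intro hw1 hyp
  have hSne : w.toWord ≠ [] := by rwa [Ne, FreeGroup.toWord_eq_nil_iff]
  have hSred : IsRed w.toWord := isRed_toWord w
  have hy1 : y ≠ 1 := by
    rintro rfl
    rw [one_pow] at hyp
    apply hSne
    have h0 : (phi n w).toWord = [] := by rw [← hyp]; exact FreeGroup.toWord_one
    rw [toWord_phi] at h0
    have h1 := congrArg List.length h0
    rw [blocks_length] at h1
    simp only [List.length_nil] at h1
    exact List.length_eq_zero_iff.1 (by omega)
  obtain ⟨U, R, hdec, hRne, hcyc, hpow⟩ := pow_toWord_structure y hy1 p (by omega)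
  have hJ : U ++ (List.replicate p R).flatten ++ FreeGroup.invRev U = blocks w.toWord := by
    rw [← hpow, hyp, toWord_phi]
  rcases eq_or_ne U [] with rfl | hUne
  · -- y is cyclically reduced
    simp only [FreeGroup.invRev_empty, List.nil_append, List.append_nil] at hJ
    have hℓpos : 0 < R.length := List.length_pos_iff.2 hRne
    have hlen : p * R.length = 4 * w.toWord.length := by
      have := congrArg List.length hJ
      rwa [flatten_replicate_length, blocks_length] at this
    have hSpos : 0 < w.toWord.length := List.length_pos_iff.2 hSne
    have h4 : R.length % 4 = 0 := by
      by_contra h4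
      have hboolJ : ∀ m' (hm' : m' < p * R.length),
          (R[m' % R.length]'(Nat.mod_lt _ hℓpos)).2 = decide (m' % 4 < 2) := by
        intro m' hm'
        have e1 := flatten_replicate_getElem R (by omega) p m' hm'
        have e2 := List.getElem_of_eq hJ (i := m')
          (by rw [flatten_replicate_length]; omega)
        exact (congrArg Prod.snd (e1.symm.trans e2)).trans
          (blocks_getElem_snd _ m' (by rw [blocks_length]; omega))
      have hper : ∀ m', m' + R.length < p * R.length →
          ((m' % 4 < 2) ↔ ((m' + R.length) % 4 < 2)) := by
        intro m' hmlt
        have h1 := hboolJ m' (by omega)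
        have h2 := hboolJ (m' + R.length) hmlt
        simp only [Nat.add_mod_right] at h2
        exact decide_eq_decide.mp (h1.symm.trans h2)
      rcases eq_or_ne R.length 1 with hl1 | hl1
      · rw [hl1, mul_one] at hlen
        have h2p : 2 ∣ p := ⟨2 * w.toWord.length, by omega⟩
        rcases Nat.Prime.eq_one_or_self_of_dvd hp 2 h2p with h | h <;> omega
      · have hmul : 2 * R.length ≤ p * R.length := Nat.mul_le_mul_right _ hp2
        have c0 := (hper 0 (by omega)).mp (by omega)
        have c1 := (hper 1 (by omega)).mp (by omega)
        simp only [Nat.zero_add] at c0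
        omega
    obtain ⟨q, hq⟩ : ∃ q, R.length = 4 * q := ⟨R.length / 4, by omega⟩
    obtain ⟨k, rfl⟩ : ∃ k, p = k + 1 := ⟨p - 1, by omega⟩
    have hRtake : R = (blocks w.toWord).take R.length := by
      rw [← hJ, List.replicate_succ, List.flatten_cons]
      exact (List.take_left ..).symm
    refine ⟨FreeGroup.mk (w.toWord.take q), ?_⟩
    have hy : y = FreeGroup.mk R := by
      conv_lhs => rw [← FreeGroup.mk_toWord (x := y)]
      rw [hdec]
      simp [FreeGroup.invRev_empty]
    rw [hy, ← mk_blocks, ← blocks_take, ← hq, ← hRtake]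
  · -- peel off a block from both ends
    obtain ⟨x, S₁, hSeq⟩ : ∃ x S₁, w.toWord = x :: S₁ := by
      rcases hS : w.toWord with _ | ⟨x, S₁⟩
      · exact absurd hS hSne
      · exact ⟨x, S₁, rfl⟩
    obtain ⟨i, e⟩ := x
    have hIUne : FreeGroup.invRev U ≠ [] := by
      intro hc; apply hUne
      have := congrArg List.length hc
      rw [FreeGroup.invRev_length] at this
      exact List.length_eq_zero_iff.1 (by simpa using this)
    have hhead : U.head? = some (gg i e, true) := by
      have h0 := congrArg List.head? hJ
      rw [hSeq, blocks_head?] at h0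
      rw [← h0, List.append_assoc, List.head?_append_of_ne_nil _ hUne]
    have hlastJ : (FreeGroup.invRev U).getLast?
        = some (gg (w.toWord.getLast hSne).1 (!(w.toWord.getLast hSne).2), false) := by
      have h0 := congrArg List.getLast? hJ
      rw [blocks_getLast? _ hSne] at h0
      rw [← h0, List.getLast?_append_of_ne_nil _ hIUne]
    rw [invRev_getLast? U, hhead] at hlastJ
    simp only [Option.map_some] at hlastJ
    have hge : gg i e = gg (w.toWord.getLast hSne).1 (!(w.toWord.getLast hSne).2) := by
      have := Option.some_injective _ hlastJ
      exact congrArg Prod.fst this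
    obtain ⟨hieq, heeq⟩ := gg_injective _ _ _ _ hge
    have hLgl : w.toWord.getLast hSne = (i, !e) := by
      have h2 : (w.toWord.getLast hSne).2 = !e := by
        rw [heeq]; simp
      exact Prod.ext hieq.symm h2
    have hS₁ne : S₁ ≠ [] := by
      rintro rfl
      have h1 : w.toWord.getLast? = some (i, e) := by rw [hSeq]; rfl
      rw [List.getLast?_eq_getLast hSne, hLgl] at h1
      simp at h1
    obtain ⟨s, S₁', rfl⟩ : ∃ s S₁', S₁ = s :: S₁' := by
      cases S₁ with
      | nil => exact absurd rfl hS₁ne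
      | cons s S₁' => exact ⟨s, S₁', rfl⟩
    have hgl : (s :: S₁').getLast? = some (i, !e) := by
      have h2 : w.toWord.getLast? = some (i, !e) := by
        rw [List.getLast?_eq_getLast hSne, hLgl]
      rw [hSeq, List.getLast?_cons_cons] at h2
      exact h2
    have hG : (s :: S₁').getLast (by simp) = (i, !e) :=
      Option.some_injective _
        ((List.getLast?_eq_getLast (l := s :: S₁') (by simp)).symm.trans hgl)
    set S₀ := (s :: S₁').dropLast with hS₀def
    have hS₀dec : s :: S₁' = S₀ ++ [(i, !e)] := by
      rw [hS₀def, ← hG]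
      exact (List.dropLast_append_getLast _).symm
    have hSfull : w.toWord = [(i, e)] ++ S₀ ++ [(i, !e)] := by
      rw [hSeq, hS₀dec]; rfl
    have hS₀ne : S₀ ≠ [] := by
      intro hc
      rw [hc] at hSfull
      have hbad := hSred
      rw [hSfull] at hbad
      have hbad' : IsRed [((i : Fin n), e), (i, !e)] := by simpa using hbad
      exact (List.isChain_cons_cons.1 hbad').1 ⟨rfl, by simp⟩
    have hS₀red : IsRed S₀ :=
      List.IsChain.infix hSred ⟨[(i, e)], [(i, !e)], by rw [hSfull]⟩
    have hdinv : (FreeGroup.mk [((i : Fin n), e)])⁻¹ = FreeGroup.mk [(i, !e)] := by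
      rw [FreeGroup.inv_mk]
      rfl
    have hwdec : w = FreeGroup.mk [(i, e)] * FreeGroup.mk S₀
        * (FreeGroup.mk [((i : Fin n), e)])⁻¹ := by
      conv_lhs => rw [← FreeGroup.mk_toWord (x := w)]
      rw [hSfull, ← FreeGroup.mul_mk, ← FreeGroup.mul_mk, hdinv]
    have hw₀toWord : (FreeGroup.mk S₀).toWord = S₀ := toWord_mk_of_isRed hS₀red
    have hw₀ne1 : FreeGroup.mk S₀ ≠ 1 := by
      rw [Ne, ← FreeGroup.toWord_eq_nil_iff, hw₀toWord]
      exact hS₀ne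
    have hlen' : (FreeGroup.mk S₀).toWord.length ≤ m := by
      rw [hw₀toWord]
      have h1 := congrArg List.length hSfull
      simp only [List.length_append, List.length_cons, List.length_nil] at h1
      omega
    set d := FreeGroup.mk [((i : Fin n), e)] with hd
    have hy₁p : ((phi n d)⁻¹ * y * phi n d) ^ p = phi n (FreeGroup.mk S₀) := by
      have hc := conj_pow (a := (phi n d)⁻¹) (b := y) (i := p)
      rw [inv_inv] at hc
      rw [hc, hyp, hwdec]
      simp only [map_mul, map_inv]
      group
    obtain ⟨z₀, hz₀⟩ := ih (FreeGroup.mk S₀) ((phi n d)⁻¹ * y * phi n d) hlen' hw₀ne1 hy₁p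
    refine ⟨d * z₀ * d⁻¹, ?_⟩
    have hyy : y = phi n d * ((phi n d)⁻¹ * y * phi n d) * (phi n d)⁻¹ := by group
    rw [hyy, hz₀]
    simp only [map_mul, map_inv]

end FreeGroupAux

/-- If `w` has no `p`-th root in `F_n`, then `φ w` has no `p`-th root in `F_{2n}`. -/
theorem no_p_root_image (n : ℕ) (p : ℕ) (hp : p.Prime) (w : FreeGroup (Fin n))
    (hw : ¬∃ y : FreeGroup (Fin n), y ^ p = w) :
    ¬∃ y : FreeGroup (Fin (2 * n)), y ^ p = phi n w := by
  rintro ⟨y, hy⟩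
  apply hw
  rcases eq_or_ne w 1 with rfl | hw1
  · exact ⟨1, one_pow p⟩
  obtain ⟨z, rfl⟩ := FreeGroupAux.key p hp w y hw1 hy
  refine ⟨z, FreeGroupAux.phi_injective ?_⟩
  rw [map_pow, hy]
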